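/- The subspace M = {a(1 + z + z²) + b·z(1 + 2z) : a, b ∈ ℂ} of H²(𝔻) is nearly (S²)*-invariant and nearly (S³)*-invariant, but is not nearly S*-invariant. -/

import Mathlib

open scoped InnerProductSpace

section Aux
variable {H : Type*} [NormedAddCommGroup H] [InnerProductSpace ℂ H] [CompleteSpace H]

private lemma shift_aux1 (e : HilbertBasis ℕ ℂ H) (S : H →L[ℂ] H)
    (hS : ∀ n : ℕ, S (e n) = e (n + 1)) (x : H) : ⟪e 0, S x⟫_ℂ = 0 := by
  have h : (innerSL ℂ (e 0)).comp S = 0 := by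
    have hd : Dense (Submodule.span ℂ (Set.range e) : Set H) := by
      rw [Submodule.dense_iff_topologicalClosure_eq_top]; exact e.dense_span
    refine ContinuousLinearMap.ext_on hd ?_
    rintro y ⟨m, rfl⟩
    have := orthonormal_iff_ite.mp e.orthonormal
    simp [hS, this]
  simpa using congrFun (congrArg DFunLike.coe h) x

private lemma shift_aux2 (e : HilbertBasis ℕ ℂ H) (S : H →L[ℂ] H)
    (hS : ∀ n : ℕ, S (e n) = e (n + 1)) (n : ℕ) (x : H) :
    ⟪e (n + 1), S x⟫_ℂ = ⟪e n, x⟫_ℂ := by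
  have h : (innerSL ℂ (e (n + 1))).comp S = innerSL ℂ (e n) := by
    have hd : Dense (Submodule.span ℂ (Set.range e) : Set H) := by
      rw [Submodule.dense_iff_topologicalClosure_eq_top]; exact e.dense_span
    refine ContinuousLinearMap.ext_on hd ?_
    rintro y ⟨m, rfl⟩
    have := orthonormal_iff_ite.mp e.orthonormal
    simp [hS, this]
  simpa using congrFun (congrArg DFunLike.coe h) x

private lemma shift_adj (e : HilbertBasis ℕ ℂ H) (S : H →L[ℂ] H)
    (hS : ∀ n : ℕ, S (e n) = e (n + 1)) (n : ℕ) :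
    ContinuousLinearMap.adjoint S (e (n + 1)) = e n := by
  apply ext_inner_left ℂ
  intro v
  rw [ContinuousLinearMap.adjoint_inner_right]
  rw [← inner_conj_symm, shift_aux2 e S hS n v, inner_conj_symm]

end Aux

/-- Hardy space model: `H` with Hilbert basis `e n ↔ zⁿ`, shift `S : e n ↦ e (n+1)`.
`M = {a(1 + z + z²) + b·z(1 + 2z) : a, b ∈ ℂ}` is nearly `(S²)*`-invariant and nearly
`(S³)*`-invariant, but not nearly `S*`-invariant. -/
theorem stmt_15 {H : Type*} [NormedAddCommGroup H] [InnerProductSpace ℂ H] [CompleteSpace H]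
    (e : HilbertBasis ℕ ℂ H) (S : H →L[ℂ] H) (hS : ∀ n : ℕ, S (e n) = e (n + 1))
    (M : Set H)
    (hM : M = {x | ∃ a b : ℂ, x = a • (e 0 + e 1 + e 2) + b • (e 1 + (2 : ℂ) • e 2)}) :
    (∀ f ∈ M, (∃ g, (S ^ 2) g = f) → ContinuousLinearMap.adjoint (S ^ 2) f ∈ M) ∧
    (∀ f ∈ M, (∃ g, (S ^ 3) g = f) → ContinuousLinearMap.adjoint (S ^ 3) f ∈ M) ∧
    ¬ (∀ f ∈ M, (∃ g, S g = f) → ContinuousLinearMap.adjoint S f ∈ M) := by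
  have hinner := orthonormal_iff_ite.mp e.orthonormal
  subst hM
  refine ⟨?_, ?_, ?_⟩
  · rintro f ⟨a, b, rfl⟩ ⟨g, hg⟩
    have hg' : S (S g) = a • (e 0 + e 1 + e 2) + b • (e 1 + (2 : ℂ) • e 2) := by
      rw [← hg, pow_succ, pow_one]; rfl
    have h0 : ⟪e 0, S (S g)⟫_ℂ = a := by
      rw [hg']; simp [inner_add_right, inner_smul_right, hinner, e.orthonormal.1]
    have h1 : ⟪e 1, S (S g)⟫_ℂ = a + b := by
      rw [hg']; simp [inner_add_right, inner_smul_right, hinner, e.orthonormal.1]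
    rw [shift_aux1 e S hS] at h0
    rw [show (1 : ℕ) = 0 + 1 from rfl, shift_aux2 e S hS, shift_aux1 e S hS] at h1
    have ha : a = 0 := h0.symm
    have hb : b = 0 := by rw [ha] at h1; simpa using h1.symm
    refine ⟨0, 0, ?_⟩
    rw [ha, hb]
    simp
  · rintro f ⟨a, b, rfl⟩ ⟨g, hg⟩
    have hg' : S (S (S g)) = a • (e 0 + e 1 + e 2) + b • (e 1 + (2 : ℂ) • e 2) := by
      rw [← hg, pow_succ, pow_succ, pow_one]; rfl
    have h0 : ⟪e 0, S (S (S g))⟫_ℂ = a := by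
      rw [hg']; simp [inner_add_right, inner_smul_right, hinner, e.orthonormal.1]
    have h1 : ⟪e 1, S (S (S g))⟫_ℂ = a + b := by
      rw [hg']; simp [inner_add_right, inner_smul_right, hinner, e.orthonormal.1]
    rw [shift_aux1 e S hS] at h0
    rw [show (1 : ℕ) = 0 + 1 from rfl, shift_aux2 e S hS, shift_aux1 e S hS] at h1
    have ha : a = 0 := h0.symm
    have hb : b = 0 := by rw [ha] at h1; simpa using h1.symm
    refine ⟨0, 0, ?_⟩
    rw [ha, hb]
    simp
  · intro h
    have hfM : (e 1 + (2 : ℂ) • e 2) ∈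
        {x | ∃ a b : ℂ, x = a • (e 0 + e 1 + e 2) + b • (e 1 + (2 : ℂ) • e 2)} :=
      ⟨0, 1, by simp⟩
    have hgf : S (e 0 + (2 : ℂ) • e 1) = e 1 + (2 : ℂ) • e 2 := by
      simp [map_add, map_smul, hS 0, hS 1]
    obtain ⟨a, b, hab⟩ := h _ hfM ⟨_, hgf⟩
    have hadj : ContinuousLinearMap.adjoint S (e 1 + (2 : ℂ) • e 2)
        = e 0 + (2 : ℂ) • e 1 := by
      rw [map_add, map_smul, shift_adj e S hS 0, shift_adj e S hS 1]
    rw [hadj] at hab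
    have h0 : (1 : ℂ) = a := by
      have := congrArg (fun x => ⟪e 0, x⟫_ℂ) hab
      simpa [inner_add_right, inner_smul_right, hinner, e.orthonormal.1] using this
    have h1 : (2 : ℂ) = a + b := by
      have := congrArg (fun x => ⟪e 1, x⟫_ℂ) hab
      simpa [inner_add_right, inner_smul_right, hinner, e.orthonormal.1] using this
    have h2 : (0 : ℂ) = a + b * 2 := by
      have := congrArg (fun x => ⟪e 2, x⟫_ℂ) hab
      simpa [inner_add_right, inner_smul_right, hinner, e.orthonormal.1] using this
    have : (3 : ℂ) = 0 := by linear_combination -h2 + 2 * h1 - h0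
    norm_num at this
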